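/- (Stability of the implicit θ-scheme.) Let H and K be real inner product spaces, B : H → K a linear map, and C > 0 a constant with ‖v‖ ≤ C·‖B v‖ for all v ∈ H. Let τ > 0, θ ∈ [1/2, 1], N ∈ ℕ, and let U⁰, …, U^N ∈ H and F¹, …, F^N ∈ H satisfy, for every 1 ≤ n ≤ N, ⟨(Uⁿ − Uⁿ⁻¹)/τ, θ·Uⁿ + (1−θ)·Uⁿ⁻¹⟩ + ‖B(θ·Uⁿ + (1−θ)·Uⁿ⁻¹)‖² = ⟨Fⁿ, θ·Uⁿ + (1−θ)·Uⁿ⁻¹⟩. Then for every 0 ≤ n ≤ N, ‖Uⁿ‖² ≤ ‖U⁰‖² + (C²·τ/2) · Σ_{j=1}^{n} ‖Fʲ‖². -/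

import Mathlib

open scoped RealInnerProductSpace

theorem theta_scheme_stability
    {H K : Type*} [NormedAddCommGroup H] [InnerProductSpace ℝ H]
    [NormedAddCommGroup K] [InnerProductSpace ℝ K]
    (B : H →ₗ[ℝ] K) (C : ℝ) (hC : 0 < C)
    (hcoer : ∀ v : H, ‖v‖ ≤ C * ‖B v‖)
    (τ θ : ℝ) (hτ : 0 < τ) (hθ : θ ∈ Set.Icc (1/2 : ℝ) 1)
    (N : ℕ) (U F : ℕ → H)
    (hrec : ∀ n, 1 ≤ n → n ≤ N →
      ⟪(1 / τ) • (U n - U (n - 1)), θ • U n + (1 - θ) • U (n - 1)⟫ +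
        ‖B (θ • U n + (1 - θ) • U (n - 1))‖^2 =
      ⟪F n, θ • U n + (1 - θ) • U (n - 1)⟫) :
    ∀ n ≤ N, ‖U n‖^2 ≤ ‖U 0‖^2 + (C^2 * τ / 2) * ∑ j ∈ Finset.Icc 1 n, ‖F j‖^2 := by
  intro n hn
  induction n with
  | zero => simp
  | succ n ih =>
    have hn' : n ≤ N := Nat.le_of_succ_le hn
    have ih' := ih hn'
    have hrec' := hrec (n+1) (Nat.le_add_left 1 n) hn
    simp only [Nat.add_sub_cancel] at hrec'
    set a := U (n+1) with ha
    set b := U n with hb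
    set W := θ • a + (1 - θ) • b with hW
    have hinner : ⟪(1/τ) • (a - b), W⟫ = (1/τ) * ⟪a - b, W⟫ :=
      real_inner_smul_left _ _ _
    have hexp : ⟪a - b, W⟫ = (1/2)*(‖a‖^2 - ‖b‖^2) + (θ - 1/2)*‖a - b‖^2 := by
      have h1 : ‖a‖^2 = ⟪a, a⟫ := (real_inner_self_eq_norm_sq a).symm
      have h2 : ‖b‖^2 = ⟪b, b⟫ := (real_inner_self_eq_norm_sq b).symm
      have h3 : ‖a - b‖^2 = ⟪a - b, a - b⟫ := (real_inner_self_eq_norm_sq _).symm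
      simp only [hW, inner_sub_left, inner_sub_right, inner_add_right,
        real_inner_smul_right, h1, h2, h3, real_inner_comm b a]
      ring
    have hFW : ⟪F (n+1), W⟫ ≤ ‖F (n+1)‖ * (C * ‖B W‖) := by
      refine le_trans (real_inner_le_norm _ _) ?_
      have h1 := hcoer W
      have h2 : (0:ℝ) ≤ ‖F (n+1)‖ := norm_nonneg _
      nlinarith
    have hstep : ‖a‖^2 ≤ ‖b‖^2 + (C^2 * τ / 2) * ‖F (n+1)‖^2 := by
      have h1 : (1/τ) * ((1/2)*(‖a‖^2 - ‖b‖^2) + (θ - 1/2)*‖a - b‖^2)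
          + ‖B W‖^2 ≤ ‖F (n+1)‖ * (C * ‖B W‖) := by
        rw [← hexp, ← hinner]
        linarith [hrec']
      have hθ1 : (1/2 : ℝ) ≤ θ := hθ.1
      have hab : (0:ℝ) ≤ ‖a - b‖^2 := sq_nonneg _
      have hy : ‖F (n+1)‖ * (C * ‖B W‖) - ‖B W‖^2 ≤ C^2 * ‖F (n+1)‖^2 / 4 := by
        nlinarith [sq_nonneg (C * ‖F (n+1)‖ - 2 * ‖B W‖)]
      have hpos : (0:ℝ) < 1/τ := one_div_pos.mpr hτ
      have h2 : (1/τ) * ((1/2)*(‖a‖^2 - ‖b‖^2)) ≤ C^2 * ‖F (n+1)‖^2 / 4 := by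
        nlinarith [mul_nonneg hpos.le (mul_nonneg (by linarith : (0:ℝ) ≤ θ - 1/2) hab)]
      have h3 : (1/2)*(‖a‖^2 - ‖b‖^2) ≤ τ * (C^2 * ‖F (n+1)‖^2 / 4) := by
        have := mul_le_mul_of_nonneg_left h2 hτ.le
        calc (1/2)*(‖a‖^2 - ‖b‖^2) = τ * ((1/τ) * ((1/2)*(‖a‖^2 - ‖b‖^2))) := by
              field_simp
          _ ≤ τ * (C^2 * ‖F (n+1)‖^2 / 4) := this
      nlinarith
    rw [Finset.sum_Icc_succ_top (Nat.le_add_left 1 n)]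
    have hF : (0:ℝ) ≤ ‖F (n+1)‖^2 := sq_nonneg _
    have hc : (0:ℝ) ≤ C^2 * τ / 2 := by positivity
    rw [mul_add]
    linarith [mul_nonneg hc hF]
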